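/- arXiv:2206.00885 — 2 statements merged into one kernel-verified Lean document; each statement's English description precedes it below -/
import Mathlib

section
/- There exists a constant C > 0, depending only on the bounds C₂ and C₃, such that for every n ≥ 2, with probability at least 1 − C/n, the empirical average of squared treatment residuals satisfies |(1/n)·Σᵢ V̂ᵢ² − (Var(V₁) + E[(Δm̂(X₁))²])| ≤ C·√(log n / n). -/
open MeasureTheory ProbabilityTheory

lemma my_exp_quad {x : ℝ} (hx : |x| ≤ 1) : Real.exp x ≤ 1 + x + 3/2 * x^2 := by
  have h := Real.exp_bound hx (by norm_num : (0:ℕ) < 2)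
  have h2 : Real.exp x - (1 + x) ≤ |x|^2 * (3 / (2 * 2)) := by
    have := (abs_sub_le_iff.1 h).1
    simpa [Finset.sum_range_succ] using this
  have h3 : |x|^2 = x^2 := sq_abs x
  nlinarith [sq_nonneg x]

lemma my_integrable_of_bound {Ω : Type*} [MeasureSpace Ω]
    [IsProbabilityMeasure (ℙ : Measure Ω)] {f : Ω → ℝ} (hf : Measurable f)
    {B : ℝ} (hb : ∀ᵐ ω, |f ω| ≤ B) : Integrable f ℙ := by
  refine ⟨hf.aestronglyMeasurable, HasFiniteIntegral.of_bounded (C := B) ?_⟩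
  filter_upwards [hb] with ω h using by simpa using h

lemma my_mgf_bound {Ω : Type*} [MeasureSpace Ω] [IsProbabilityMeasure (ℙ : Measure Ω)]
    (Z : Ω → ℝ) (hm : Measurable Z) {B t : ℝ} (hB : 1 ≤ B)
    (hb : ∀ᵐ ω, |Z ω| ≤ B) (hmean : 𝔼[Z] = 0) (ht : |t| ≤ 1/B) :
    mgf Z ℙ t ≤ Real.exp (3/2 * t^2 * B^2) := by
  have hB0 : 0 < B := lt_of_lt_of_le one_pos hB
  have htZ : ∀ᵐ ω, |t * Z ω| ≤ 1 := by
    filter_upwards [hb] with ω h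
    calc |t * Z ω| = |t| * |Z ω| := abs_mul _ _
    _ ≤ (1/B) * B := by
        apply mul_le_mul ht h (abs_nonneg _) (by positivity)
    _ = 1 := by field_simp
  have hintZ : Integrable Z ℙ := my_integrable_of_bound hm hb
  have hintZ2 : Integrable (fun ω => Z ω ^ 2) ℙ := by
    refine my_integrable_of_bound (hm.pow_const 2) (B := B^2) ?_
    filter_upwards [hb] with ω h
    rw [abs_pow]
    exact pow_le_pow_left₀ (abs_nonneg _) h 2
  have hintexp : Integrable (fun ω => Real.exp (t * Z ω)) ℙ := by
    refine my_integrable_of_bound (by fun_prop) (B := Real.exp 1) ?_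
    filter_upwards [htZ] with ω h
    rw [abs_of_pos (Real.exp_pos _)]
    exact Real.exp_le_exp.2 ((le_abs_self _).trans h)
  have step1 : mgf Z ℙ t ≤ ∫ ω, (1 + t * Z ω + 3/2 * (t * Z ω)^2) ∂ℙ := by
    refine integral_mono_ae hintexp ?_ ?_
    · apply (integrable_const (1:ℝ)).add (hintZ.const_mul t) |>.add
      · have : Integrable (fun ω => (3/2 * t^2) * Z ω ^ 2) ℙ := hintZ2.const_mul _
        exact this.congr (ae_of_all _ fun ω => by ring)
    · filter_upwards [htZ] with ω h using my_exp_quad h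
  have hZ2B : ∫ ω, Z ω ^ 2 ∂ℙ ≤ B^2 := by
    calc ∫ ω, Z ω ^ 2 ∂ℙ ≤ ∫ _, B^2 ∂ℙ := by
          refine integral_mono_ae hintZ2 (integrable_const _) ?_
          filter_upwards [hb] with ω h
          calc Z ω ^ 2 = |Z ω|^2 := (sq_abs _).symm
          _ ≤ B^2 := pow_le_pow_left₀ (abs_nonneg _) h 2
    _ = B^2 := by simp
  have step2 : ∫ ω, (1 + t * Z ω + 3/2 * (t * Z ω)^2) ∂ℙ
      = 1 + 3/2 * t^2 * ∫ ω, Z ω ^ 2 ∂ℙ := by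
    have e1 : (fun ω => 1 + t * Z ω + 3/2 * (t * Z ω)^2)
        = fun ω => (1 + t * Z ω) + (3/2 * t^2) * Z ω ^ 2 := by
      ext ω; ring
    have h1 : Integrable (fun ω => 1 + t * Z ω) ℙ := by
      have := (integrable_const (1:ℝ)).add (hintZ.const_mul t)
      simpa using this
    have h2 : Integrable (fun ω => (3/2 * t^2) * Z ω ^ 2) ℙ := hintZ2.const_mul _
    rw [e1, integral_add h1 h2,
      integral_add (integrable_const _) (hintZ.const_mul t), MeasureTheory.integral_const_mul,
      MeasureTheory.integral_const_mul, hmean]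
    simp
  calc mgf Z ℙ t ≤ 1 + 3/2 * t^2 * ∫ ω, Z ω ^ 2 ∂ℙ := by rw [← step2]; exact step1
  _ ≤ 1 + 3/2 * t^2 * B^2 := by nlinarith [sq_nonneg t]
  _ ≤ Real.exp (3/2 * t^2 * B^2) := by
      have := Real.add_one_le_exp (3/2 * t^2 * B^2); linarith

lemma my_hoeffding {Ω : Type*} [MeasureSpace Ω] (hP : IsProbabilityMeasure (ℙ : Measure Ω))
    (Z : ℕ → Ω → ℝ) {B : ℝ} (hB : 1 ≤ B)
    (hm : ∀ i, Measurable (Z i))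
    (hind : iIndepFun Z ℙ)
    (hb : ∀ i, ∀ᵐ ω, |Z i ω| ≤ B)
    (hmean : ∀ i, 𝔼[Z i] = 0)
    (n : ℕ) (hn : 0 < n) {a : ℝ} (ha : 0 ≤ a) :
    ℙ {ω | a < |∑ i ∈ Finset.range n, Z i ω|}
      ≤ ENNReal.ofReal (2 * Real.exp (-(a^2) / (6 * B^2 * n))) := by
  have hB0 : 0 < B := lt_of_lt_of_le one_pos hB
  have hn0 : (0:ℝ) < n := by exact_mod_cast hn
  by_cases hcase : a ≤ 3 * B * n
  · -- Chernoff case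
    set t : ℝ := a / (3 * B^2 * n) with ht_def
    have ht0 : 0 ≤ t := by positivity
    have htB : |t| ≤ 1/B := by
      rw [abs_of_nonneg ht0, ht_def, div_le_div_iff₀ (by positivity) hB0]
      nlinarith
    have hexp_int : ∀ (s : ℝ), |s| ≤ 1/B →
        ∀ i, Integrable (fun ω => Real.exp (s * Z i ω)) ℙ := by
      intro s hs i
      refine my_integrable_of_bound (by fun_prop) (B := Real.exp 1) ?_
      filter_upwards [hb i] with ω h
      rw [abs_of_pos (Real.exp_pos _)]
      refine Real.exp_le_exp.2 ((le_abs_self _).trans ?_)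
      calc |s * Z i ω| = |s| * |Z i ω| := abs_mul _ _
      _ ≤ (1/B) * B := mul_le_mul hs h (abs_nonneg _) (by positivity)
      _ = 1 := by field_simp
    have hmgf : ∀ (s : ℝ), |s| ≤ 1/B →
        mgf (∑ i ∈ Finset.range n, Z i) ℙ s ≤ Real.exp (n * (3/2 * s^2 * B^2)) := by
      intro s hs
      rw [hind.mgf_sum hm]
      calc ∏ i ∈ Finset.range n, mgf (Z i) ℙ s
          ≤ ∏ _i ∈ Finset.range n, Real.exp (3/2 * s^2 * B^2) := by
            refine Finset.prod_le_prod (fun i _ => mgf_nonneg) ?_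
            exact fun i _ => my_mgf_bound (Z i) (hm i) hB (hb i) (hmean i) hs
      _ = Real.exp (n * (3/2 * s^2 * B^2)) := by
            rw [Finset.prod_const, ← Real.exp_nat_mul]
            simp
    have hEbound : -t * a + n * (3/2 * t^2 * B^2) = -(a^2) / (6 * B^2 * n) := by
      rw [ht_def]; field_simp; ring
    have hup : (ℙ {ω | a ≤ (∑ i ∈ Finset.range n, Z i) ω}).toReal
        ≤ Real.exp (-(a^2) / (6 * B^2 * n)) := by
      calc (ℙ {ω | a ≤ (∑ i ∈ Finset.range n, Z i) ω}).toReal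
          ≤ Real.exp (-t * a) * mgf (∑ i ∈ Finset.range n, Z i) ℙ t :=
            measure_ge_le_exp_mul_mgf a ht0
              (hind.integrable_exp_mul_sum hm (fun i _ => hexp_int t htB i))
      _ ≤ Real.exp (-t * a) * Real.exp (n * (3/2 * t^2 * B^2)) := by
            have := hmgf t htB
            have h0 := Real.exp_pos (-t * a)
            nlinarith
      _ = Real.exp (-(a^2) / (6 * B^2 * n)) := by rw [← Real.exp_add, ← hEbound]
    have hlow : (ℙ {ω | (∑ i ∈ Finset.range n, Z i) ω ≤ -a}).toReal
        ≤ Real.exp (-(a^2) / (6 * B^2 * n)) := by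
      have hnt : |(-t)| ≤ 1/B := by rwa [abs_neg]
      calc (ℙ {ω | (∑ i ∈ Finset.range n, Z i) ω ≤ -a}).toReal
          ≤ Real.exp (-(-t) * (-a)) * mgf (∑ i ∈ Finset.range n, Z i) ℙ (-t) :=
            measure_le_le_exp_mul_mgf (-a) (neg_nonpos.2 ht0)
              (hind.integrable_exp_mul_sum hm (fun i _ => hexp_int (-t) hnt i))
      _ ≤ Real.exp (-t * a) * Real.exp (n * (3/2 * t^2 * B^2)) := by
            have := hmgf (-t) hnt
            have h0 := Real.exp_pos (-(-t) * (-a))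
            have he : -(-t) * (-a) = -t * a := by ring
            rw [he] at h0 ⊢
            have h1 : n * (3/2 * (-t)^2 * B^2) = n * (3/2 * t^2 * B^2) := by ring
            rw [h1] at this
            nlinarith
      _ = Real.exp (-(a^2) / (6 * B^2 * n)) := by rw [← Real.exp_add, ← hEbound]
    have hsub : {ω | a < |∑ i ∈ Finset.range n, Z i ω|}
        ⊆ {ω | a ≤ (∑ i ∈ Finset.range n, Z i) ω}
          ∪ {ω | (∑ i ∈ Finset.range n, Z i) ω ≤ -a} := by
      intro ω hω
      simp only [Set.mem_setOf_eq, Set.mem_union, Finset.sum_apply] at hω ⊢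
      rcases lt_abs.1 hω with h | h
      · exact Or.inl h.le
      · exact Or.inr (by linarith)
    have hone : ∀ (E : Set Ω), (ℙ E).toReal ≤ Real.exp (-(a^2) / (6 * B^2 * n)) →
        ℙ E ≤ ENNReal.ofReal (Real.exp (-(a^2) / (6 * B^2 * n))) := by
      intro E hE
      rw [← ENNReal.ofReal_toReal (measure_ne_top ℙ E)]
      exact ENNReal.ofReal_le_ofReal hE
    calc ℙ {ω | a < |∑ i ∈ Finset.range n, Z i ω|}
        ≤ ℙ ({ω | a ≤ (∑ i ∈ Finset.range n, Z i) ω}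
            ∪ {ω | (∑ i ∈ Finset.range n, Z i) ω ≤ -a}) := measure_mono hsub
    _ ≤ ℙ {ω | a ≤ (∑ i ∈ Finset.range n, Z i) ω}
        + ℙ {ω | (∑ i ∈ Finset.range n, Z i) ω ≤ -a} := measure_union_le _ _
    _ ≤ ENNReal.ofReal (Real.exp (-(a^2) / (6 * B^2 * n)))
        + ENNReal.ofReal (Real.exp (-(a^2) / (6 * B^2 * n))) :=
          add_le_add (hone _ hup) (hone _ hlow)
    _ = ENNReal.ofReal (2 * Real.exp (-(a^2) / (6 * B^2 * n))) := by
          rw [← ENNReal.ofReal_add (Real.exp_pos _).le (Real.exp_pos _).le]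
          ring_nf
  · -- trivial case: a > 3Bn ≥ Bn, event is null
    have hae : ∀ᵐ ω, ¬ (a < |∑ i ∈ Finset.range n, Z i ω|) := by
      have hall : ∀ᵐ ω, ∀ i, |Z i ω| ≤ B := MeasureTheory.ae_all_iff.2 hb
      filter_upwards [hall] with ω h
      push_neg
      calc |∑ i ∈ Finset.range n, Z i ω| ≤ ∑ i ∈ Finset.range n, |Z i ω| :=
            Finset.abs_sum_le_sum_abs _ _
      _ ≤ ∑ _i ∈ Finset.range n, B := Finset.sum_le_sum (fun i _ => h i)
      _ = n * B := by rw [Finset.sum_const]; simp [mul_comm]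
      _ ≤ a := by nlinarith
    have hz : ℙ {ω | a < |∑ i ∈ Finset.range n, Z i ω|} = 0 :=
      MeasureTheory.measure_eq_zero_iff_ae_notMem.mpr hae
    rw [hz]
    exact zero_le
set_option maxHeartbeats 1000000 in
/-- There exists a constant `C > 0`, depending only on the bounds `C₂`
and `C₃`, such that for every `n ≥ 2`, with probability at least `1 − C/n`, the empirical
average of squared treatment residuals satisfies
`|(1/n)·Σᵢ V̂ᵢ² − (Var(V₁) + E[(Δm̂(X₁))²])| ≤ C·√(log n / n)`. -/
theorem dml_denominator_concentration (C₂ C₃ : ℝ) :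
    ∃ C > (0 : ℝ), ∀ (Ω : Type) [MeasureSpace Ω],
      IsProbabilityMeasure (ℙ : Measure Ω) →
      ∀ (d : ℕ) (g m mhat : (Fin d → ℝ) → ℝ) (θ : ℝ)
        (X : ℕ → Ω → (Fin d → ℝ)) (D Y θ' U V : ℕ → Ω → ℝ),
        Measurable g → Measurable m → Measurable mhat →
        (∀ i, Measurable (X i)) → (∀ i, Measurable (D i)) → (∀ i, Measurable (Y i)) →
        (∀ i, Measurable (θ' i)) → (∀ i, Measurable (U i)) → (∀ i, Measurable (V i)) →
        -- partially linear model
        (∀ i ω, Y i ω = g (X i ω) + D i ω * θ' i ω + U i ω) →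
        (∀ i ω, D i ω = m (X i ω) + V i ω) →
        -- the samples (Xᵢ, Dᵢ, Yᵢ, θᵢ') are i.i.d.
        iIndepFun
          (fun i ω => (X i ω, D i ω, Y i ω, θ' i ω)) ℙ →
        (∀ i, IdentDistrib (fun ω => (X i ω, D i ω, Y i ω, θ' i ω))
                (fun ω => (X 0 ω, D 0 ω, Y 0 ω, θ' 0 ω)) ℙ ℙ) →
        -- Uᵢ, Vᵢ, θᵢ' mutually independent and independent of Xᵢ
        (∀ i, iIndepFun ![U i, V i, θ' i] ℙ) →
        (∀ i, IndepFun (X i) (fun ω => (U i ω, V i ω, θ' i ω)) ℙ) →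
        (∀ i, 𝔼[U i] = 0) → (∀ i, 𝔼[V i] = 0) → (∀ i, 𝔼[θ' i] = θ) →
        -- boundedness
        (∀ i, ∀ᵐ ω, |V i ω| ≤ C₂) →
        (∀ i, ∀ᵐ ω, |m (X i ω) - mhat (X i ω)| ≤ C₃) →
        ∀ n : ℕ, 2 ≤ n →
        ℙ {ω | |(1 / (n : ℝ)) * (∑ i ∈ Finset.range n, (D i ω - mhat (X i ω)) ^ 2)
                - (Var[V 0] + 𝔼[fun ω' => (m (X 0 ω') - mhat (X 0 ω')) ^ 2])|
              ≤ C * Real.sqrt (Real.log n / n)}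
          ≥ 1 - ENNReal.ofReal (C / n) := by
  set K : ℝ := |C₂| + |C₃| with hKdef
  set B : ℝ := K ^ 2 + 1 with hBdef
  have hK0 : 0 ≤ K := by positivity
  have hB : 1 ≤ B := by nlinarith [sq_nonneg K]
  have hB0 : 0 < B := lt_of_lt_of_le one_pos hB
  refine ⟨12 * B ^ 2, by positivity, ?_⟩
  intro Ω _ hP d g m mhat θ X D Y θ' U V hg hm hmhat hX hD hY hθ' hU hV
    hmodelY hmodelD hiid hident hUVθ hXind hEU hEV hEθ hbV hbΔ n hn
  have hn0 : (0:ℝ) < n := by positivity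
  have hn1 : (1:ℝ) ≤ n := by exact_mod_cast (by omega : 1 ≤ n)
  have hn2 : (2:ℝ) ≤ n := by exact_mod_cast hn
  -- residual decomposition
  have hres : ∀ i ω, D i ω - mhat (X i ω) = V i ω + (m (X i ω) - mhat (X i ω)) := by
    intro i ω; rw [hmodelD i ω]; ring
  have hbres : ∀ i, ∀ᵐ ω, |D i ω - mhat (X i ω)| ≤ K := by
    intro i
    filter_upwards [hbV i, hbΔ i] with ω h1 h2
    rw [hres i ω]
    calc |V i ω + (m (X i ω) - mhat (X i ω))| ≤ |V i ω| + |m (X i ω) - mhat (X i ω)| :=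
        abs_add_le _ _
    _ ≤ K := by
        rw [hKdef]
        have := le_abs_self C₂; have := le_abs_self C₃; linarith
  -- squared residuals
  set W : ℕ → Ω → ℝ := fun i ω => (D i ω - mhat (X i ω)) ^ 2 with hWdef
  have hWm : ∀ i, Measurable (W i) := fun i => ((hD i).sub (hmhat.comp (hX i))).pow_const 2
  have hWb : ∀ i, ∀ᵐ ω, 0 ≤ W i ω ∧ W i ω ≤ K ^ 2 := by
    intro i
    filter_upwards [hbres i] with ω h
    refine ⟨sq_nonneg _, ?_⟩
    calc (D i ω - mhat (X i ω)) ^ 2 = |D i ω - mhat (X i ω)| ^ 2 := (sq_abs _).symm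
    _ ≤ K ^ 2 := by nlinarith [abs_nonneg (D i ω - mhat (X i ω))]
  have hWint : ∀ i, Integrable (W i) ℙ := by
    intro i
    refine my_integrable_of_bound (hWm i) (B := K ^ 2) ?_
    filter_upwards [hWb i] with ω h
    rw [abs_of_nonneg h.1]; exact h.2
  set μ0 : ℝ := 𝔼[W 0] with hμ0def
  have hμ0_nonneg : 0 ≤ μ0 := integral_nonneg fun ω => sq_nonneg _
  have hμ0_le : μ0 ≤ K ^ 2 := by
    calc μ0 ≤ ∫ _, K ^ 2 ∂ℙ := by
          refine integral_mono_ae (hWint 0) (integrable_const _) ?_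
          filter_upwards [hWb 0] with ω h using h.2
    _ = K ^ 2 := by simp
  -- centered variables
  set Z : ℕ → Ω → ℝ := fun i ω => (D i ω - mhat (X i ω)) ^ 2 - μ0 with hZdef
  have hZm : ∀ i, Measurable (Z i) := fun i => (hWm i).sub measurable_const
  have hZb : ∀ i, ∀ᵐ ω, |Z i ω| ≤ B := by
    intro i
    filter_upwards [hWb i] with ω h
    simp only [hWdef] at h
    have hz : Z i ω = (D i ω - mhat (X i ω)) ^ 2 - μ0 := rfl
    rw [abs_le]
    constructor <;> nlinarith [h.1, h.2, hμ0_nonneg, hμ0_le, hBdef, hz, sq_nonneg K]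
  -- independence and identical distribution of Z
  set ψ : (Fin d → ℝ) × ℝ × ℝ × ℝ → ℝ := fun p => (p.2.1 - mhat p.1) ^ 2 - μ0 with hψdef
  have hψm : Measurable ψ :=
    ((measurable_snd.fst.sub (hmhat.comp measurable_fst)).pow_const 2).sub measurable_const
  have hZind : iIndepFun Z ℙ :=
    hiid.comp (fun _ => ψ) (fun _ => hψm)
  have hZident : ∀ i, IdentDistrib (Z i) (Z 0) ℙ ℙ := fun i => (hident i).comp hψm
  have hZ0mean : 𝔼[Z 0] = 0 := by
    have : 𝔼[Z 0] = 𝔼[W 0] - μ0 := by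
      rw [show Z 0 = fun ω => W 0 ω - μ0 from rfl]
      rw [integral_sub (hWint 0) (integrable_const _)]
      simp
    rw [this]; simp [hμ0def]
  have hZmean : ∀ i, 𝔼[Z i] = 0 := fun i => (hZident i).integral_eq.trans hZ0mean
  -- identification of the mean
  have hμsplit : Var[V 0] + 𝔼[fun ω' => (m (X 0 ω') - mhat (X 0 ω')) ^ 2] = μ0 := by
    have hVb : ∀ᵐ ω, ‖V 0 ω‖ ≤ |C₂| := by
      filter_upwards [hbV 0] with ω h
      exact h.trans (le_abs_self _)
    have hVmem : MemLp (V 0) 2 ℙ := MemLp.of_bound (hV 0).aestronglyMeasurable _ hVb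
    have hVar : Var[V 0] = ∫ ω, V 0 ω ^ 2 ∂ℙ := by
      rw [variance_eq_sub hVmem, hEV 0]
      simp [Pi.pow_apply]
    have hAm : Measurable (fun ω => m (X 0 ω) - mhat (X 0 ω)) :=
      (hm.comp (hX 0)).sub (hmhat.comp (hX 0))
    have hcross : ∫ ω, (m (X 0 ω) - mhat (X 0 ω)) * V 0 ω ∂ℙ = 0 := by
      have hind : IndepFun (fun ω => m (X 0 ω) - mhat (X 0 ω)) (V 0) ℙ := by
        have := (hXind 0).comp (φ := fun x => m x - mhat x)
          (ψ := fun p : ℝ × ℝ × ℝ => p.2.1) (hm.sub hmhat) measurable_snd.fst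
        exact this
      have := hind.integral_mul_eq_mul_integral hAm.aestronglyMeasurable (hV 0).aestronglyMeasurable
      simp only [Pi.mul_apply] at this
      rw [show (∫ ω, (m (X 0 ω) - mhat (X 0 ω)) * V 0 ω ∂ℙ)
          = ∫ ω, ((fun ω => m (X 0 ω) - mhat (X 0 ω)) * V 0) ω ∂ℙ from rfl]
      simp only [Pi.mul_apply]; rw [this, hEV 0, mul_zero]
    -- integrabilities
    have hVsq_int : Integrable (fun ω => V 0 ω ^ 2) ℙ := hVmem.integrable_sq
    have hAsq_int : Integrable (fun ω => (m (X 0 ω) - mhat (X 0 ω)) ^ 2) ℙ := by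
      refine my_integrable_of_bound (hAm.pow_const 2) (B := C₃ ^ 2) ?_
      filter_upwards [hbΔ 0] with ω h
      rw [abs_pow, ← sq_abs C₃]
      exact pow_le_pow_left₀ (abs_nonneg _) (h.trans (le_abs_self _)) 2
    have hcross_int : Integrable (fun ω => (m (X 0 ω) - mhat (X 0 ω)) * V 0 ω) ℙ := by
      refine my_integrable_of_bound (hAm.mul (hV 0)) (B := |C₃| * |C₂|) ?_
      filter_upwards [hbΔ 0, hbV 0] with ω h1 h2
      rw [abs_mul]
      exact mul_le_mul (h1.trans (le_abs_self _)) (h2.trans (le_abs_self _))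
        (abs_nonneg _) (abs_nonneg _)
    have hexpand : μ0 = (∫ ω, V 0 ω ^ 2 ∂ℙ)
        + ((2 : ℝ) * ∫ ω, (m (X 0 ω) - mhat (X 0 ω)) * V 0 ω ∂ℙ)
        + ∫ ω, (m (X 0 ω) - mhat (X 0 ω)) ^ 2 ∂ℙ := by
      have he : W 0 = fun ω => V 0 ω ^ 2
          + ((2:ℝ) * ((m (X 0 ω) - mhat (X 0 ω)) * V 0 ω))
          + (m (X 0 ω) - mhat (X 0 ω)) ^ 2 := by
        funext ω
        rw [hWdef]
        simp only
        rw [hres 0 ω]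
        ring
      have hi1 : Integrable (fun ω => V 0 ω ^ 2
          + (2:ℝ) * ((m (X 0 ω) - mhat (X 0 ω)) * V 0 ω)) ℙ := by
        have := hVsq_int.add (hcross_int.const_mul 2)
        exact this
      have hi2 : Integrable (fun ω => (2:ℝ) * ((m (X 0 ω) - mhat (X 0 ω)) * V 0 ω)) ℙ :=
        hcross_int.const_mul 2
      rw [hμ0def, he, integral_add hi1 hAsq_int,
        integral_add hVsq_int hi2, MeasureTheory.integral_const_mul]
    rw [hVar, hexpand, hcross]
    ring
  -- apply Hoeffding
  set ε : ℝ := 12 * B ^ 2 * Real.sqrt (Real.log n / n) with hεdef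
  have hlog0 : 0 ≤ Real.log n := Real.log_nonneg hn1
  have hsq : Real.sqrt (Real.log n / n) ^ 2 = Real.log n / n :=
    Real.sq_sqrt (by positivity)
  have hε0 : 0 ≤ ε := by positivity
  set a : ℝ := n * ε with hadef
  have hkey : ∀ ω, (|(1 / (n : ℝ)) * (∑ i ∈ Finset.range n, (D i ω - mhat (X i ω)) ^ 2)
      - (Var[V 0] + 𝔼[fun ω' => (m (X 0 ω') - mhat (X 0 ω')) ^ 2])| ≤ ε
      ↔ |∑ i ∈ Finset.range n, Z i ω| ≤ a) := by
    intro ω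
    have hsum : ∑ i ∈ Finset.range n, Z i ω
        = (∑ i ∈ Finset.range n, (D i ω - mhat (X i ω)) ^ 2) - n * μ0 := by
      rw [hZdef]
      simp only
      rw [Finset.sum_sub_distrib, Finset.sum_const, Finset.card_range]
      ring
    rw [hμsplit, hsum]
    have h1 : (1 / (n : ℝ)) * (∑ i ∈ Finset.range n, (D i ω - mhat (X i ω)) ^ 2) - μ0
        = (1 / (n : ℝ)) * ((∑ i ∈ Finset.range n, (D i ω - mhat (X i ω)) ^ 2) - n * μ0) := by
      field_simp
    rw [h1, abs_mul, abs_of_pos (by positivity : (0:ℝ) < 1 / (n:ℝ))]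
    rw [hadef]
    constructor
    · intro h
      have := mul_le_mul_of_nonneg_left h (le_of_lt hn0)
      calc |∑ i ∈ Finset.range n, (D i ω - mhat (X i ω)) ^ 2 - ↑n * μ0|
          = ↑n * (1 / ↑n * |∑ i ∈ Finset.range n, (D i ω - mhat (X i ω)) ^ 2 - ↑n * μ0|) := by
            field_simp
      _ ≤ ↑n * ε := this
    · intro h
      calc 1 / ↑n * |∑ i ∈ Finset.range n, (D i ω - mhat (X i ω)) ^ 2 - ↑n * μ0|
          ≤ 1 / ↑n * (↑n * ε) := by
            apply mul_le_mul_of_nonneg_left h (by positivity)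
      _ = ε := by field_simp
  set E : Set Ω := {ω | |(1 / (n : ℝ)) * (∑ i ∈ Finset.range n, (D i ω - mhat (X i ω)) ^ 2)
      - (Var[V 0] + 𝔼[fun ω' => (m (X 0 ω') - mhat (X 0 ω')) ^ 2])| ≤ ε} with hEdef
  have hcompl : ℙ Eᶜ ≤ ENNReal.ofReal (12 * B ^ 2 / n) := by
    have hsetiq : Eᶜ = {ω | a < |∑ i ∈ Finset.range n, Z i ω|} := by
      rw [hEdef]
      ext ω
      simp only [Set.mem_compl_iff, Set.mem_setOf_eq, not_le, hkey ω]
    rw [hsetiq]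
    refine (my_hoeffding hP Z hB hZm hZind hZb hZmean n (by omega) (by positivity)).trans ?_
    apply ENNReal.ofReal_le_ofReal
    have haa : a ^ 2 = 144 * B ^ 4 * (n : ℝ) * Real.log n := by
      rw [hadef, hεdef, mul_pow, mul_pow, hsq]
      field_simp
      ring
    have hexp_eq : -(a ^ 2) / (6 * B ^ 2 * n) = -(24 * B ^ 2 * Real.log n) := by
      rw [haa]
      field_simp
      ring
    rw [hexp_eq]
    have hB2 : 1 ≤ B ^ 2 := by nlinarith
    have h24 : 2 * Real.log n ≤ 24 * B ^ 2 * Real.log n := by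
      have h2B : (2:ℝ) ≤ 24 * B ^ 2 := by linarith
      exact mul_le_mul_of_nonneg_right h2B hlog0
    calc 2 * Real.exp (-(24 * B ^ 2 * Real.log n)) ≤ 2 * Real.exp (-(2 * Real.log n)) := by
          have hh := Real.exp_le_exp.2 (neg_le_neg h24)
          linarith
    _ = 2 / (n : ℝ) ^ 2 := by
          rw [Real.exp_neg, show (2 : ℝ) * Real.log n = (2 : ℕ) * Real.log n by norm_num,
            Real.exp_nat_mul, Real.exp_log hn0]
          ring
    _ ≤ 12 * B ^ 2 / n := by
          rw [div_le_div_iff₀ (by positivity) hn0]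
          nlinarith [hB2, hn2, sq_nonneg ((n:ℝ) - 2)]
  -- conclude
  rw [ge_iff_le]
  have hunion : (1 : ENNReal) ≤ ℙ E + ℙ Eᶜ := by
    have h1 := measure_union_le (μ := ℙ) E Eᶜ
    rwa [Set.union_compl_self, measure_univ] at h1
  calc 1 - ENNReal.ofReal (12 * B ^ 2 / n) ≤ 1 - ℙ Eᶜ := tsub_le_tsub_left hcompl 1
  _ ≤ ℙ E := tsub_le_iff_right.mpr hunion
end

section
/- If Var(V) > 0, E[(Δm̂(X))²] ≤ η_m, and E[(Δℓ̂(X))²] ≤ η_ℓ for nonnegative reals η_m, η_ℓ, then the DML bias B_DML := (E[Δm̂(X)·Δℓ̂(X)] − θ·E[(Δm̂(X))²]) / (Var(V) + E[(Δm̂(X))²]) satisfies |B_DML| ≤ (√(η_m·η_ℓ) + |θ|·η_m) / Var(V). -/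
open MeasureTheory ProbabilityTheory

open MeasureTheory ProbabilityTheory in
private lemma cs_aux {Ω : Type*} [MeasureSpace Ω] [IsProbabilityMeasure (ℙ : Measure Ω)]
    (f h : Ω → ℝ) (hf : Measurable f) (hh : Measurable h) (C₃ C₄ : ℝ)
    (hbf : ∀ᵐ ω, |f ω| ≤ C₃) (hbh : ∀ᵐ ω, |h ω| ≤ C₄) :
    |∫ ω, f ω * h ω| ≤ Real.sqrt (∫ ω, f ω ^ 2) * Real.sqrt (∫ ω, h ω ^ 2) := by
  have hf2 : MemLp f 2 ℙ := MemLp.of_bound hf.aestronglyMeasurable C₃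
    (by filter_upwards [hbf] with ω hω; simpa [Real.norm_eq_abs] using hω)
  have hh2 : MemLp h 2 ℙ := MemLp.of_bound hh.aestronglyMeasurable C₄
    (by filter_upwards [hbh] with ω hω; simpa [Real.norm_eq_abs] using hω)
  have hcs := integral_mul_le_Lp_mul_Lq_of_nonneg (μ := ℙ)
    (p := 2) (q := 2) (Real.holderConjugate_iff.mpr ⟨one_lt_two, by norm_num⟩)
    (f := fun ω => |f ω|) (g := fun ω => |h ω|)
    (Filter.Eventually.of_forall fun ω => abs_nonneg _)
    (Filter.Eventually.of_forall fun ω => abs_nonneg _)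
    (by rw [show ENNReal.ofReal 2 = 2 by norm_num]; exact hf2.abs) (by rw [show ENNReal.ofReal 2 = 2 by norm_num]; exact hh2.abs)
  calc |∫ ω, f ω * h ω| ≤ ∫ ω, |f ω * h ω| := by
        simpa [Real.norm_eq_abs, abs_mul] using norm_integral_le_integral_norm (μ := ℙ) (fun ω => f ω * h ω)
    _ = ∫ ω, |f ω| * |h ω| := integral_congr_ae (Filter.Eventually.of_forall fun ω => abs_mul _ _)
    _ ≤ (∫ ω, |f ω| ^ (2:ℝ)) ^ (1/(2:ℝ)) * (∫ ω, |h ω| ^ (2:ℝ)) ^ (1/(2:ℝ)) := hcs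
    _ = Real.sqrt (∫ ω, f ω ^ 2) * Real.sqrt (∫ ω, h ω ^ 2) := by
        rw [Real.sqrt_eq_rpow, Real.sqrt_eq_rpow]
        congr 2 <;> apply integral_congr_ae <;>
          exact Filter.Eventually.of_forall fun ω => by
            simp [Real.rpow_natCast, sq_abs, Real.rpow_two]


/-- If `Var(V) > 0`, `E[(Δm̂(X))²] ≤ η_m`, and `E[(Δℓ̂(X))²] ≤ η_ℓ`
for nonnegative reals `η_m, η_ℓ`, then the DML bias
`B_DML := (E[Δm̂(X)·Δℓ̂(X)] − θ·E[(Δm̂(X))²]) / (Var(V) + E[(Δm̂(X))²])` satisfies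
`|B_DML| ≤ (√(η_m·η_ℓ) + |θ|·η_m) / Var(V)`. -/
theorem dml_bias_bound_consistency
    {Ω : Type*} [MeasureSpace Ω] [IsProbabilityMeasure (ℙ : Measure Ω)]
    {d : ℕ} (X : Ω → (Fin d → ℝ)) (D Y θ' U V : Ω → ℝ)
    (g m mhat lhat : (Fin d → ℝ) → ℝ) (θ : ℝ) (C₃ C₄ : ℝ)
    (hXm : Measurable X) (hDm : Measurable D) (hYm : Measurable Y)
    (hθ'm : Measurable θ') (hUm : Measurable U) (hVm : Measurable V)
    (hg : Measurable g) (hm : Measurable m)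
    (hmhat : Measurable mhat) (hlhat : Measurable lhat)
    (hmodelY : ∀ ω, Y ω = g (X ω) + D ω * θ' ω + U ω)
    (hmodelD : ∀ ω, D ω = m (X ω) + V ω)
    (hindep : iIndepFun ![U, V, θ'] ℙ)
    (hindepX : IndepFun X (fun ω => (U ω, V ω, θ' ω)) ℙ)
    (hEU : 𝔼[U] = 0) (hEV : 𝔼[V] = 0) (hEθ : 𝔼[θ'] = θ)
    -- `ℓ(x) := g(x) + θ·m(x)`, `Δm̂(x) := m(x) − m̂(x)`, `Δℓ̂(x) := ℓ(x) − ℓ̂(x)`.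
    (ℓ Δmhat Δlhat : (Fin d → ℝ) → ℝ)
    (hℓ : ∀ x, ℓ x = g x + θ * m x)
    (hΔm : ∀ x, Δmhat x = m x - mhat x)
    (hΔl : ∀ x, Δlhat x = ℓ x - lhat x)
    (hbΔm : ∀ᵐ ω, |Δmhat (X ω)| ≤ C₃) (hbΔl : ∀ᵐ ω, |Δlhat (X ω)| ≤ C₄)
    (ηm ηl : ℝ) (hηm0 : 0 ≤ ηm) (hηl0 : 0 ≤ ηl)
    (hVarV : 0 < Var[V])
    (hηm : 𝔼[fun ω => (Δmhat (X ω)) ^ 2] ≤ ηm)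
    (hηl : 𝔼[fun ω => (Δlhat (X ω)) ^ 2] ≤ ηl) :
    |(𝔼[fun ω => Δmhat (X ω) * Δlhat (X ω)] - θ * 𝔼[fun ω => (Δmhat (X ω)) ^ 2])
        / (Var[V] + 𝔼[fun ω => (Δmhat (X ω)) ^ 2])|
      ≤ (Real.sqrt (ηm * ηl) + |θ| * ηm) / Var[V] := by
  have hΔmEq : Δmhat = fun x => m x - mhat x := funext hΔm
  have hℓEq : ℓ = fun x => g x + θ * m x := funext hℓ
  have hΔlEq : Δlhat = fun x => ℓ x - lhat x := funext hΔl
  have hfm : Measurable fun ω => Δmhat (X ω) := by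
    rw [hΔmEq]; exact (hm.sub hmhat).comp hXm
  have hhm : Measurable fun ω => Δlhat (X ω) := by
    rw [hΔlEq, hℓEq]
    exact ((hg.add (measurable_const.mul hm)).sub hlhat).comp hXm
  set f : Ω → ℝ := fun ω => Δmhat (X ω) with hfdef
  set h : Ω → ℝ := fun ω => Δlhat (X ω) with hhdef
  set A : ℝ := ∫ ω, f ω * h ω with hA
  set B : ℝ := ∫ ω, f ω ^ 2 with hB
  have hB0 : 0 ≤ B := integral_nonneg fun ω => sq_nonneg _
  have hh2nn : 0 ≤ ∫ ω, h ω ^ 2 := integral_nonneg fun ω => sq_nonneg _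
  have hAbd : |A| ≤ Real.sqrt (ηm * ηl) := by
    have h1 := cs_aux f h hfm hhm C₃ C₄ hbΔm hbΔl
    refine h1.trans ?_
    rw [Real.sqrt_mul hηm0]
    exact mul_le_mul (Real.sqrt_le_sqrt hηm) (Real.sqrt_le_sqrt hηl)
      (Real.sqrt_nonneg _) (Real.sqrt_nonneg _)
  have hnum : |A - θ * B| ≤ Real.sqrt (ηm * ηl) + |θ| * ηm := by
    refine (abs_sub _ _).trans ?_
    rw [abs_mul, abs_of_nonneg hB0]
    exact add_le_add hAbd (mul_le_mul_of_nonneg_left hηm (abs_nonneg θ))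
  have hden : 0 < Var[V] + B := by linarith
  rw [abs_div, abs_of_pos hden]
  exact div_le_div₀ (by positivity) hnum hVarV (by linarith)
end
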